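/- On the Shishkin mesh (with ρ = min(T/2, ā⁻¹ ε ln N)), the fine-part sum satisfies: Σ_{j=1}^{N/2} ∫_{ξ_{j−1}}^{ξ_j} (ξ_j − τ)(τ − ξ_{j−1}) ε⁻² e^{−ā τ/ε} dτ ≤ (h⁽¹⁾)² ā⁻¹ ε⁻¹ ≤ 2 T ā⁻² N⁻² ln N. -/

import Mathlib

/-- Shishkin transition point `ρ = min(T/2, ā⁻¹ ε ln N)`. -/
noncomputable def sRho (T abar ε : ℝ) (N : ℕ) : ℝ :=
  min (T / 2) (abar⁻¹ * ε * Real.log N)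

/-- Fine step size `h⁽¹⁾ = 2ρ/N`. -/
noncomputable def sH1 (T abar ε : ℝ) (N : ℕ) : ℝ := 2 * sRho T abar ε N / N

/-- Coarse step size `h⁽²⁾ = 2(T−ρ)/N`. -/
noncomputable def sH2 (T abar ε : ℝ) (N : ℕ) : ℝ :=
  2 * (T - sRho T abar ε N) / N

/-- Shishkin mesh points `ξ_i`. -/
noncomputable def sXi (T abar ε : ℝ) (N i : ℕ) : ℝ :=
  if i ≤ N / 2 then (i : ℝ) * sH1 T abar ε N
  else sRho T abar ε N + ((i : ℝ) - (N : ℝ) / 2) * sH2 T abar ε N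

set_option maxHeartbeats 1000000 in
/-- fine-part bound
`Σ_{j=1}^{N/2} ∫_{ξ_{j−1}}^{ξ_j} (ξ_j−τ)(τ−ξ_{j−1}) ε⁻² e^{−ā τ/ε} dτ
  ≤ (h⁽¹⁾)² ā⁻¹ ε⁻¹ ≤ 2 T ā⁻² N⁻² ln N` on the Shishkin mesh. -/
theorem fine_part_quadrature_sum_bound
    (T abar ε : ℝ) (N : ℕ) (hT : 0 < T) (habar : 0 < abar)
    (hε : 0 < ε) (hε1 : ε ≤ 1) (hN : 4 ≤ N) (hNeven : Even N) :
    (∑ j ∈ Finset.Icc 1 (N / 2),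
        ∫ τ in sXi T abar ε N (j - 1)..sXi T abar ε N j,
          (sXi T abar ε N j - τ) * (τ - sXi T abar ε N (j - 1)) *
            ((ε ^ 2)⁻¹ * Real.exp (-(abar * τ) / ε)))
      ≤ (sH1 T abar ε N) ^ 2 * abar⁻¹ * ε⁻¹ ∧
    (sH1 T abar ε N) ^ 2 * abar⁻¹ * ε⁻¹
      ≤ 2 * T * (abar ^ 2)⁻¹ * ((N : ℝ) ^ 2)⁻¹ * Real.log N := by
  set ρ := sRho T abar ε N with hρdef
  set h := sH1 T abar ε N with hhdef
  have hNpos : (0:ℝ) < N := by positivity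
  have hlog : 0 < Real.log N := Real.log_pos (by exact_mod_cast lt_of_lt_of_le (by norm_num) hN)
  have hρpos : 0 < ρ := lt_min (by linarith) (by positivity)
  have hρle1 : ρ ≤ T / 2 := min_le_left _ _
  have hρle2 : ρ ≤ abar⁻¹ * ε * Real.log N := min_le_right _ _
  have hhpos : 0 < h := by
    rw [hhdef, sH1]; positivity
  set m := N / 2 with hmdef
  have hm2 : (m : ℝ) = (N : ℝ) / 2 := by
    obtain ⟨k, hk⟩ := hNeven
    subst hk
    have : (k + k) / 2 = k := by omega
    rw [hmdef, this]; push_cast; ring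
  have hmh : (m : ℝ) * h = ρ := by
    rw [hm2, hhdef, sH1, ← hρdef]
    field_simp
  have hXi : ∀ j, j ≤ N / 2 → sXi T abar ε N j = (j : ℝ) * h := by
    intro j hj
    rw [sXi, if_pos hj]
  set c : ℝ → ℝ := fun τ => (ε ^ 2)⁻¹ * Real.exp (-(abar * τ) / ε) with hcdef
  have hecont : Continuous fun τ : ℝ => Real.exp (-(abar * τ) / ε) :=
    Real.continuous_exp.comp (((continuous_const.mul continuous_id).neg).div_const ε)
  have hccont : Continuous c := continuous_const.mul hecont
  have hcnn : ∀ τ, 0 ≤ c τ := fun τ => by positivity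
  constructor
  · -- part 1
    have step1 : ∀ j ∈ Finset.Icc 1 m,
        (∫ τ in sXi T abar ε N (j - 1)..sXi T abar ε N j,
          (sXi T abar ε N j - τ) * (τ - sXi T abar ε N (j - 1)) * c τ)
        ≤ ∫ τ in (((j:ℝ) - 1) * h)..((j:ℝ) * h), h ^ 2 / 4 * c τ := by
      intro j hj
      rw [Finset.mem_Icc] at hj
      have hj1 : 1 ≤ j := hj.1
      have hjm : j ≤ N / 2 := hj.2
      have e1 : sXi T abar ε N j = (j : ℝ) * h := hXi j hjm
      have e2 : sXi T abar ε N (j - 1) = ((j:ℝ) - 1) * h := by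
        rw [hXi (j-1) (le_trans (Nat.sub_le _ _) hjm)]
        have : ((j - 1 : ℕ) : ℝ) = (j : ℝ) - 1 := by
          push_cast [hj1]; ring
        rw [this]
      rw [e1, e2]
      have hab : ((j:ℝ) - 1) * h ≤ (j:ℝ) * h := by nlinarith
      apply intervalIntegral.integral_mono_on hab
      · exact Continuous.intervalIntegrable
          (((continuous_const.sub continuous_id).mul
            (continuous_id.sub continuous_const)).mul hccont) _ _
      · exact Continuous.intervalIntegrable (continuous_const.mul hccont) _ _
      · intro τ hτ
        rw [Set.mem_Icc] at hτ
        have key : ((j:ℝ) * h - τ) * (τ - ((j:ℝ) - 1) * h) ≤ h ^ 2 / 4 := by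
          nlinarith [sq_nonneg (((j:ℝ) - 1) * h + (j:ℝ) * h - 2 * τ)]
        exact mul_le_mul_of_nonneg_right key (hcnn τ)
    refine (Finset.sum_le_sum step1).trans ?_
    have hrange : ∑ j ∈ Finset.Icc 1 m,
        (∫ τ in (((j:ℝ) - 1) * h)..((j:ℝ) * h), h ^ 2 / 4 * c τ)
        = ∑ i ∈ Finset.range m,
        (∫ τ in ((i:ℝ) * h)..(((i:ℝ) + 1) * h), h ^ 2 / 4 * c τ) := by
      rw [← Finset.Ico_add_one_right_eq_Icc, Finset.sum_Ico_eq_sum_range]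
      apply Finset.sum_congr (by norm_num)
      intro i _
      push_cast
      congr 1 <;> ring
    rw [hrange]
    have hadj : ∑ i ∈ Finset.range m,
        (∫ τ in ((i:ℝ) * h)..(((i:ℝ) + 1) * h), h ^ 2 / 4 * c τ)
        = ∫ τ in (0:ℝ)..((m:ℝ) * h), h ^ 2 / 4 * c τ := by
      have := intervalIntegral.sum_integral_adjacent_intervals
        (a := fun k : ℕ => (k : ℝ) * h) (f := fun τ => h ^ 2 / 4 * c τ) (μ := MeasureTheory.volume)
        (n := m) (fun k _ => Continuous.intervalIntegrable (continuous_const.mul hccont) _ _)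
      simpa using this
    rw [hadj, hmh]
    -- compute the integral
    have hF : ∀ τ : ℝ, HasDerivAt (fun t => -(ε / abar) * Real.exp (-(abar * t) / ε))
        (Real.exp (-(abar * τ) / ε)) τ := by
      intro τ
      have hu : HasDerivAt (fun t : ℝ => -(abar * t) / ε) (-abar / ε) τ := by
        simpa using (((hasDerivAt_id τ).const_mul abar).neg.div_const ε)
      have := (hu.exp).const_mul (-(ε / abar))
      refine this.congr_deriv ?_
      field_simp
    have hint : ∫ τ in (0:ℝ)..ρ, Real.exp (-(abar * τ) / ε)
        = ε / abar * (1 - Real.exp (-(abar * ρ) / ε)) := by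
      rw [intervalIntegral.integral_eq_sub_of_hasDerivAt (fun τ _ => hF τ)
        (Continuous.intervalIntegrable hecont _ _)]
      rw [mul_zero, neg_zero, zero_div, Real.exp_zero]
      ring
    have : (∫ τ in (0:ℝ)..ρ, h ^ 2 / 4 * c τ)
        = h ^ 2 / 4 * ((ε ^ 2)⁻¹ * (ε / abar * (1 - Real.exp (-(abar * ρ) / ε)))) := by
      rw [hcdef]
      simp only []
      rw [intervalIntegral.integral_const_mul, intervalIntegral.integral_const_mul, hint]
    rw [this]
    have hexp01 : Real.exp (-(abar * ρ) / ε) ≤ 1 := by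
      have hx : -(abar * ρ) / ε ≤ 0 :=
        div_nonpos_of_nonpos_of_nonneg (by nlinarith) hε.le
      exact Real.exp_le_one_iff.mpr hx
    have hexp0 : 0 ≤ Real.exp (-(abar * ρ) / ε) := Real.exp_nonneg _
    rw [show (h:ℝ) ^ 2 * abar⁻¹ * ε⁻¹ = h ^ 2 * (abar⁻¹ * ε⁻¹) by ring]
    have h1 : (ε ^ 2)⁻¹ * (ε / abar * (1 - Real.exp (-(abar * ρ) / ε))) ≤ abar⁻¹ * ε⁻¹ := by
      have : (ε ^ 2)⁻¹ * (ε / abar) = abar⁻¹ * ε⁻¹ := by field_simp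
      nlinarith [mul_pos (inv_pos.mpr habar) (inv_pos.mpr hε)]
    nlinarith [sq_nonneg h, mul_pos (inv_pos.mpr habar) (inv_pos.mpr hε)]
  · -- part 2
    have hρ2 : ρ ^ 2 ≤ (T / 2) * (abar⁻¹ * ε * Real.log N) := by
      have := mul_le_mul hρle1 hρle2 hρpos.le (by linarith)
      nlinarith
    have heq : h ^ 2 * abar⁻¹ * ε⁻¹ = ρ ^ 2 * (4 * abar⁻¹ * ε⁻¹ * ((N:ℝ) ^ 2)⁻¹) := by
      rw [hhdef, sH1]
      field_simp
      ring
    rw [heq]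
    have hstep : ρ ^ 2 * (4 * abar⁻¹ * ε⁻¹ * ((N:ℝ) ^ 2)⁻¹)
        ≤ (T / 2) * (abar⁻¹ * ε * Real.log N) * (4 * abar⁻¹ * ε⁻¹ * ((N:ℝ) ^ 2)⁻¹) :=
      mul_le_mul_of_nonneg_right hρ2 (by positivity)
    refine hstep.trans_eq ?_
    field_simp
    ring
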